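/- arXiv:1011.0236 — 3 statements merged into one kernel-verified Lean document; each statement's English description precedes it below -/
import Mathlib

section
/- The cost c(x₁,…,x_l) = Σᵢ σᵢ |xᵢ - x̄|² with l ≥ 2 and all σᵢ > 0 is (1,l)-twisted: for any fixed x₂,…,x_{l−1}, the map x_l ↦ ∇_{x₁} c(x₁,…,x_l) from ℝⁿ to ℝⁿ is injective. -/
open InnerProductSpace

lemma quadGrad {E : Type*} [NormedAddCommGroup E] [InnerProductSpace ℝ E] [CompleteSpace E]
    (a t b C : ℝ) (v x : E) :
    HasGradientAt (fun y : E => a * ‖y‖^2 + C - t * ‖b • y + v‖^2)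
      ((2*a) • x - (2*t*b) • (b • x + v)) x := by
  have h1 : HasFDerivAt (fun y : E => ‖y‖^2) (2 • (innerSL ℝ x)) x := by
    simpa using (hasFDerivAt_id x).norm_sq
  have h2 : HasFDerivAt (fun y : E => b • y + v) (b • ContinuousLinearMap.id ℝ E) x :=
    ((hasFDerivAt_id x).const_smul b).add_const v
  have h3 := h2.norm_sq
  have h4 := ((h1.const_mul a).add_const C).sub (h3.const_mul t)
  rw [hasGradientAt_iff_hasFDerivAt]
  refine h4.congr_fderiv ?_
  ext y
  simp [inner_sub_left, inner_smul_left, inner_smul_right, real_inner_smul_left, inner_add_left]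
  ring

lemma expandSum {n l : ℕ} (σ : Fin l → ℝ) (hS : (∑ k, σ k) ≠ 0)
    (x : Fin l → EuclideanSpace ℝ (Fin n)) :
    ∑ i, σ i * ‖x i - (∑ k, σ k)⁻¹ • ∑ k, σ k • x k‖ ^ 2
      = ∑ i, σ i * ‖x i‖ ^ 2 - (∑ k, σ k)⁻¹ * ‖∑ k, σ k • x k‖ ^ 2 := by
  set S := ∑ k, σ k with hSdef
  set w : EuclideanSpace ℝ (Fin n) := ∑ k, σ k • x k with hw
  have hterm : ∀ i, σ i * ‖x i - S⁻¹ • w‖ ^ 2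
      = σ i * ‖x i‖ ^ 2 - 2 * S⁻¹ * (σ i * inner ℝ (x i) w) + S⁻¹^2 * ‖w‖^2 * σ i := by
    intro i
    rw [@norm_sub_sq_real, real_inner_smul_right, norm_smul]
    simp [abs_of_nonneg, mul_pow]
    ring
  rw [Finset.sum_congr rfl (fun i _ => hterm i)]
  rw [Finset.sum_add_distrib, Finset.sum_sub_distrib, ← Finset.mul_sum, ← Finset.mul_sum]
  have hinner : ∑ i, σ i * inner ℝ (x i) w = ‖w‖^2 := by
    rw [← real_inner_self_eq_norm_sq, hw, sum_inner]
    exact Finset.sum_congr rfl (fun i _ => (real_inner_smul_left _ _ _).symm)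
  rw [hinner, ← hSdef]
  field_simp
  ring

/-- The weighted barycentric cost is `(1,l)`-twisted: for fixed `x₁,…,x_{l-1}`,
the map `x_l ↦ ∇_{x₁} c(x₁,…,x_l)` is injective. -/
theorem stmt3 {n l : ℕ} (hl : 2 ≤ l) (σ : Fin l → ℝ) (hσ : ∀ i, 0 < σ i)
    (c : (Fin l → EuclideanSpace ℝ (Fin n)) → ℝ)
    (hc : ∀ x, c x = ∑ i, σ i * ‖x i - (∑ k, σ k)⁻¹ • ∑ k, σ k • x k‖ ^ 2)
    (p : Fin l → EuclideanSpace ℝ (Fin n)) :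
    Function.Injective (fun xl : EuclideanSpace ℝ (Fin n) =>
      gradient
        (fun x1 =>
          c (Function.update (Function.update p ⟨l - 1, by omega⟩ xl)
              ⟨0, by omega⟩ x1))
        (p ⟨0, by omega⟩)) := by
  have hlpos : 0 < l := by omega
  set zero : Fin l := ⟨0, by omega⟩ with hzero
  set last : Fin l := ⟨l - 1, by omega⟩ with hlast
  have hzl : zero ≠ last := by
    simp only [hzero, hlast, ne_eq, Fin.mk.injEq]
    omega
  set S := ∑ k, σ k with hSdef
  have hSpos : 0 < S := Finset.sum_pos (fun i _ => hσ i) ⟨zero, Finset.mem_univ _⟩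
  have hSne : S ≠ 0 := ne_of_gt hSpos
  -- the fixed middle part
  set m : EuclideanSpace ℝ (Fin n) := ∑ k ∈ (Finset.univ.erase zero).erase last, σ k • p k with hm
  set vv : EuclideanSpace ℝ (Fin n) → EuclideanSpace ℝ (Fin n) := fun xl => σ last • xl + m with hvv
  set CC : EuclideanSpace ℝ (Fin n) → ℝ := fun xl => ∑ i ∈ Finset.univ.erase zero,
      σ i * ‖Function.update p last xl i‖ ^ 2 with hCC
  have hlast_mem : last ∈ Finset.univ.erase zero :=
    Finset.mem_erase.2 ⟨hzl.symm, Finset.mem_univ _⟩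
  -- rewrite the objective as an explicit quadratic in x1
  have hfun : ∀ xl x1 : EuclideanSpace ℝ (Fin n),
      c (Function.update (Function.update p last xl) zero x1)
        = σ zero * ‖x1‖ ^ 2 + CC xl - S⁻¹ * ‖σ zero • x1 + vv xl‖ ^ 2 := by
    intro xl x1
    rw [hc, expandSum σ hSne]
    set z := Function.update p last xl with hz
    have h1 : ∑ i, σ i * ‖Function.update z zero x1 i‖ ^ 2
        = σ zero * ‖x1‖ ^ 2 + CC xl := by
      rw [← Finset.add_sum_erase _ _ (Finset.mem_univ zero), Function.update_self]
      simp only [hCC]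
      congr 1
      apply Finset.sum_congr rfl
      intro k hk
      rw [Function.update_of_ne (Finset.mem_erase.1 hk).1]
    have h2 : ∑ k, σ k • Function.update z zero x1 k = σ zero • x1 + vv xl := by
      rw [← Finset.add_sum_erase _ _ (Finset.mem_univ zero), Function.update_self]
      simp only [hvv]
      congr 1
      rw [← Finset.add_sum_erase _ _ hlast_mem]
      congr 1
      · rw [Function.update_of_ne hzl.symm, hz, Function.update_self]
      · apply Finset.sum_congr rfl
        intro k hk
        obtain ⟨hk1, hk2⟩ := Finset.mem_erase.1 hk
        rw [Function.update_of_ne (Finset.mem_erase.1 hk2).1, hz,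
          Function.update_of_ne hk1]
    rw [h1, h2]
  -- compute the gradient
  have hgrad : ∀ xl : EuclideanSpace ℝ (Fin n),
      gradient (fun x1 => c (Function.update (Function.update p last xl) zero x1)) (p zero)
        = (2 * σ zero) • p zero
          - (2 * S⁻¹ * σ zero) • (σ zero • p zero + vv xl) := by
    intro xl
    have : (fun x1 => c (Function.update (Function.update p last xl) zero x1))
        = fun x1 => σ zero * ‖x1‖ ^ 2 + CC xl - S⁻¹ * ‖σ zero • x1 + vv xl‖ ^ 2 :=
      funext (hfun xl)
    rw [this]
    exact (quadGrad (σ zero) S⁻¹ (σ zero) (CC xl) (vv xl) (p zero)).gradient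
  intro a b hab
  simp only [hgrad] at hab
  have h3 : (2 * S⁻¹ * σ zero) • (σ zero • p zero + vv a)
      = (2 * S⁻¹ * σ zero) • (σ zero • p zero + vv b) := sub_right_injective hab
  have hcoef : (2 * S⁻¹ * σ zero) ≠ 0 :=
    ne_of_gt (mul_pos (mul_pos two_pos (inv_pos.2 hSpos)) (hσ zero))
  have h4 := smul_right_injective (EuclideanSpace ℝ (Fin n)) hcoef h3
  have h5 : vv a = vv b := add_left_cancel h4
  rw [hvv] at h5
  simp only [add_left_inj] at h5
  exact smul_right_injective (EuclideanSpace ℝ (Fin n)) (ne_of_gt (hσ last)) h5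
end

section
/- For c(x₁,…,x_l) = Σᵢ σᵢ |xᵢ - x̄|² with l ≥ 3 and all σᵢ > 0, the matrix T := S + H with S = −Σ_{j=2}^{l−1} Σ_{i=2, i≠j}^{l−1} D²_{x_i x_j}c + Σ_{i,j=2}^{l−1} D²_{x_i x_l}c (D²_{x₁ x_l}c)^{−1} D²_{x₁ x_j}c and H = 0 equals Σ_{i=2}^{l−1} (−2σᵢ²/Σ_k σ_k) times the identity on the corresponding block, and in particular T is negative definite. -/
/-- For the weighted barycentric cost, whose mixed second derivatives are the
scalar multiples `a i j` of the identity, the matrix `T = S + H` (with `H = 0`)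
from Pass's condition is diagonal on the middle blocks with entries
`-2σᵢ²/∑σ`, and in particular negative definite. Indices are 0-based, so the
middle indices `2,…,l-1` of the paper correspond to `1 ≤ i ≤ l-2`. -/
theorem stmt5 {l : ℕ} (hl : 3 ≤ l) (σ : Fin l → ℝ) (hσ : ∀ i, 0 < σ i)
    (a : Fin l → Fin l → ℝ)
    (ha : ∀ i j, a i j =
      if i = j then 2 * (σ i - σ i ^ 2 / ∑ k, σ k)
      else -2 * σ i * σ j / ∑ k, σ k)
    (T : Fin l → Fin l → ℝ)
    (hT : ∀ i j, T i j = (if i = j then 0 else -(a i j)) +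
      a i ⟨l - 1, by omega⟩ * a ⟨0, by omega⟩ j / a ⟨0, by omega⟩ ⟨l - 1, by omega⟩) :
    (∀ i j : Fin l, 1 ≤ i.val → i.val ≤ l - 2 → 1 ≤ j.val → j.val ≤ l - 2 →
        T i j = if i = j then -2 * σ i ^ 2 / ∑ k, σ k else 0) ∧
      ∀ v : Fin l → ℝ, (∀ i : Fin l, ¬(1 ≤ i.val ∧ i.val ≤ l - 2) → v i = 0) →
        v ≠ 0 → ∑ i, ∑ j, T i j * v i * v j < 0 := by
  have hS : 0 < ∑ k, σ k :=
    Finset.sum_pos (fun i _ => hσ i) ⟨⟨0, by omega⟩, Finset.mem_univ _⟩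
  have hSne : (∑ k, σ k) ≠ 0 := ne_of_gt hS
  have hze : (⟨0, by omega⟩ : Fin l) ≠ ⟨l - 1, by omega⟩ :=
    Fin.ne_of_val_ne (by simp; omega)
  have key : ∀ i j : Fin l, 1 ≤ i.val → i.val ≤ l - 2 → 1 ≤ j.val → j.val ≤ l - 2 →
      T i j = if i = j then -2 * σ i ^ 2 / ∑ k, σ k else 0 := by
    intro i j hi1 hi2 hj1 hj2
    have hie : i ≠ ⟨l - 1, by omega⟩ := Fin.ne_of_val_ne (by simp; omega)
    have hzj : (⟨0, by omega⟩ : Fin l) ≠ j := Fin.ne_of_val_ne (by simp; omega)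
    rw [hT, ha i j, ha i ⟨l - 1, by omega⟩, ha ⟨0, by omega⟩ j,
      ha ⟨0, by omega⟩ ⟨l - 1, by omega⟩, if_neg hie, if_neg hzj, if_neg hze]
    have h0 := hσ ⟨0, by omega⟩
    have hlast := hσ ⟨l - 1, by omega⟩
    by_cases h : i = j
    · subst h
      simp only [if_pos rfl, ↓reduceIte]
      field_simp
      ring
    · simp only [if_neg h]
      field_simp
      ring
  refine ⟨key, ?_⟩
  intro v hv hvne
  have hterm : ∀ i j : Fin l, T i j * v i * v j =
      if i = j then -2 * σ i ^ 2 / (∑ k, σ k) * v i ^ 2 else 0 := by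
    intro i j
    by_cases hvi : v i = 0
    · by_cases h : i = j
      · subst h; simp [hvi]
      · simp [hvi, h]
    · by_cases hvj : v j = 0
      · by_cases h : i = j
        · subst h; simp [hvj]
        · simp [hvj, h]
      · have hi : 1 ≤ i.val ∧ i.val ≤ l - 2 := by
          by_contra h; exact hvi (hv i h)
        have hj : 1 ≤ j.val ∧ j.val ≤ l - 2 := by
          by_contra h; exact hvj (hv j h)
        rw [key i j hi.1 hi.2 hj.1 hj.2]
        by_cases h : i = j
        · subst h; rw [if_pos rfl, if_pos rfl]; ring
        · simp [h]
  have hsum : ∑ i, ∑ j, T i j * v i * v j =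
      ∑ i, -2 * σ i ^ 2 / (∑ k, σ k) * v i ^ 2 := by
    refine Finset.sum_congr rfl fun i _ => ?_
    simp only [hterm, Finset.sum_ite_eq, Finset.mem_univ, if_true]
  rw [hsum]
  obtain ⟨i0, hi0⟩ : ∃ i, v i ≠ 0 := by
    by_contra h; push_neg at h; exact hvne (funext h)
  have : (0 : ℝ) = ∑ i : Fin l, (0 : ℝ) := by simp
  rw [show (0:ℝ) = ∑ _i : Fin l, (0:ℝ) by simp]
  refine Finset.sum_lt_sum (fun i _ => ?_) ⟨i0, Finset.mem_univ _, ?_⟩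
  · have hneg : -2 * σ i ^ 2 / (∑ k, σ k) < 0 :=
      div_neg_of_neg_of_pos (by nlinarith [hσ i]) hS
    exact mul_nonpos_of_nonpos_of_nonneg hneg.le (sq_nonneg _)
  · have hneg : -2 * σ i0 ^ 2 / (∑ k, σ k) < 0 :=
      div_neg_of_neg_of_pos (by nlinarith [hσ i0]) hS
    have hv2 : 0 < v i0 ^ 2 := by positivity
    exact mul_neg_of_neg_of_pos hneg hv2
end

section
/- Let ν₀ minimize Φ(ν) = Σᵢ₌₁^l W₂(μᵢ,ν) with W₂(μᵢ,ν₀) > 0 for all i, and set σᵢ = 1/W₂(ν₀,μᵢ). Then ν₀ also minimizes Ψ(μ) = Σᵢ σᵢ W₂(μᵢ,μ)² over all μ. -/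
/-- If `ν₀` minimizes `ν ↦ ∑ᵢ d(μᵢ, ν)` with `d(μᵢ, ν₀) > 0` for all `i`, then
with weights `σᵢ = 1 / d(μᵢ, ν₀)`, `ν₀` also minimizes
`ν ↦ ∑ᵢ σᵢ d(μᵢ, ν)²`. (In the paper, `d = W₂` on Wasserstein space.) -/
theorem stmt10 {Y : Type*} [MetricSpace Y] {l : ℕ} (μ : Fin l → Y) (ν₀ : Y)
    (hpos : ∀ i, 0 < dist (μ i) ν₀)
    (hmin : ∀ ν, ∑ i, dist (μ i) ν₀ ≤ ∑ i, dist (μ i) ν) :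
    ∀ ν, ∑ i, (dist (μ i) ν₀)⁻¹ * dist (μ i) ν₀ ^ 2 ≤
      ∑ i, (dist (μ i) ν₀)⁻¹ * dist (μ i) ν ^ 2 := by
  intro ν
  have hL : ∑ i, (dist (μ i) ν₀)⁻¹ * dist (μ i) ν₀ ^ 2 = ∑ i, dist (μ i) ν₀ := by
    refine Finset.sum_congr rfl fun i _ => ?_
    rw [pow_two, ← mul_assoc, inv_mul_cancel₀ (hpos i).ne']
    ring
  have key : ∀ i, 2 * dist (μ i) ν - dist (μ i) ν₀ ≤
      (dist (μ i) ν₀)⁻¹ * dist (μ i) ν ^ 2 := by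
    intro i
    have h0 := hpos i
    have : 0 ≤ (dist (μ i) ν₀)⁻¹ * (dist (μ i) ν - dist (μ i) ν₀) ^ 2 :=
      mul_nonneg (by positivity) (sq_nonneg _)
    have hexp : (dist (μ i) ν₀)⁻¹ * (dist (μ i) ν - dist (μ i) ν₀) ^ 2 =
        (dist (μ i) ν₀)⁻¹ * dist (μ i) ν ^ 2 - (2 * dist (μ i) ν - dist (μ i) ν₀) := by
      field_simp
      ring
    linarith [hexp ▸ this]
  calc ∑ i, (dist (μ i) ν₀)⁻¹ * dist (μ i) ν₀ ^ 2
      = ∑ i, dist (μ i) ν₀ := hL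
    _ ≤ 2 * ∑ i, dist (μ i) ν - ∑ i, dist (μ i) ν₀ := by
        have := hmin ν; linarith
    _ = ∑ i, (2 * dist (μ i) ν - dist (μ i) ν₀) := by
        rw [Finset.sum_sub_distrib, Finset.mul_sum]
    _ ≤ ∑ i, (dist (μ i) ν₀)⁻¹ * dist (μ i) ν ^ 2 :=
        Finset.sum_le_sum fun i _ => key i
end
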